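/- Let T be a tree on [n] and G a connected graph on [n]. Then the depth-first tree T(G) produced by ordered DFS on G equals T if and only if G can be obtained from T by adding some subset of the edges permitted by the ordered DFS of T. -/

import Mathlib

open scoped Classical
noncomputable section

namespace RandomGraphs

variable {n : ℕ}

/-- One step of ordered depth-first search (oDFS): the state is the pair
(stack of open vertices, set of explored vertices). The first vertex of the
stack is explored: it is removed and its unseen neighbors are prepended to the
stack in increasing order. -/
def dfsStep (G : SimpleGraph (Fin n)) :
    List (Fin n) × Finset (Fin n) → List (Fin n) × Finset (Fin n) :=
  fun st =>
    match st with
    | ([], A) => ([], A)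
    | (v :: rest, A) =>
        (((G.neighborFinset v).filter
            (fun w => w ∉ A ∧ w ∉ (v :: rest))).sort (· ≤ ·) ++ rest,
          insert v A)

/-- The oDFS state at time `i`, started from the stack containing only vertex `0`
(the vertex with smallest label). -/
def dfsState (G : SimpleGraph (Fin n)) (i : ℕ) :
    List (Fin n) × Finset (Fin n) :=
  (dfsStep G)^[i] ((List.finRange n).take 1, ∅)

/-- The stack `O_i` of open vertices at time `i`. -/
def stackAt (G : SimpleGraph (Fin n)) (i : ℕ) : List (Fin n) :=
  (dfsState G i).1

/-- The depth-first walk `X(i) = |O_i| - 1` of a connected graph. -/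
def dfw (G : SimpleGraph (Fin n)) (i : ℕ) : ℕ :=
  (stackAt G i).length - 1

/-- The area `a(T) = Σ_{i=1}^{n-1} X(i)` of a tree. -/
def area (G : SimpleGraph (Fin n)) : ℕ :=
  ∑ i ∈ Finset.Ico 1 n, dfw G i

/-- The set of (unordered) edges permitted by oDFS run on `T`: non-edges `uv`
of `T` such that both `u` and `v` lie in the stack `O_i` for some `i < n`. -/
def permittedSet (T : SimpleGraph (Fin n)) : Set (Sym2 (Fin n)) :=
  {e | ∃ u v : Fin n, e = s(u, v) ∧ u ≠ v ∧ ¬ T.Adj u v ∧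
    ∃ i < n, u ∈ stackAt T i ∧ v ∈ stackAt T i}

/-- The set of neighbors of the currently explored vertex which have not been
seen before (these become new open vertices, and the corresponding edges are
the tree edges discovered at time `i`). -/
def newNbrs (G : SimpleGraph (Fin n)) (i : ℕ) : Finset (Fin n) :=
  match dfsState G i with
  | ([], _) => ∅
  | (v :: rest, A) => (G.neighborFinset v).filter (fun w => w ∉ A ∧ w ∉ (v :: rest))

/-- The depth-first tree `T(G)` of a connected graph `G`: its edges join
the vertex explored at step `i` to each of its previously-unseen neighbors. -/
def dfTree (G : SimpleGraph (Fin n)) : SimpleGraph (Fin n) :=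
  SimpleGraph.fromRel (fun u v =>
    ∃ i < n, (stackAt G i).head? = some u ∧ v ∈ newNbrs G i)

/-! ### New auxiliary definitions -/

/-- explored set at time i -/
def explAt (G : SimpleGraph (Fin n)) (i : ℕ) : Finset (Fin n) :=
  (dfsState G i).2

/-- seen set at time i -/
def seenF (G : SimpleGraph (Fin n)) (i : ℕ) : Finset (Fin n) :=
  (dfsState G i).2 ∪ (stackAt G i).toFinset

variable {G T : SimpleGraph (Fin n)}

lemma dfsState_zero (G : SimpleGraph (Fin n)) :
    dfsState G 0 = ((List.finRange n).take 1, ∅) := rfl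

lemma dfsState_succ (G : SimpleGraph (Fin n)) (i : ℕ) :
    dfsState G (i + 1) = dfsStep G (dfsState G i) :=
  Function.iterate_succ_apply' _ _ _

lemma stackAt_zero (h : 0 < n) : stackAt G 0 = [(⟨0, h⟩ : Fin n)] := by
  obtain ⟨m, rfl⟩ := Nat.exists_eq_succ_of_ne_zero h.ne'
  show ((List.finRange (m+1)).take 1) = _
  rw [List.finRange_succ]
  rfl

lemma explAt_zero : explAt G 0 = ∅ := rfl

lemma dfsState_eq (G : SimpleGraph (Fin n)) (i : ℕ) :
    dfsState G i = (stackAt G i, explAt G i) := rfl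

lemma dfsState_succ_cons {v : Fin n} {rest : List (Fin n)}
    (h : stackAt G i = v :: rest) :
    dfsState G (i+1) =
      (((G.neighborFinset v).filter
          (fun w => w ∉ explAt G i ∧ w ∉ (v :: rest))).sort (· ≤ ·) ++ rest,
        insert v (explAt G i)) := by
  rw [dfsState_succ, dfsState_eq G i, h]
  rfl

lemma dfsState_succ_nil (h : stackAt G i = []) :
    dfsState G (i+1) = dfsState G i := by
  rw [dfsState_succ, dfsState_eq G i, h]
  rfl

lemma stackAt_succ_cons {v : Fin n} {rest : List (Fin n)}
    (h : stackAt G i = v :: rest) :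
    stackAt G (i+1) = ((G.neighborFinset v).filter
        (fun w => w ∉ explAt G i ∧ w ∉ (v :: rest))).sort (· ≤ ·) ++ rest := by
  unfold stackAt; rw [dfsState_succ_cons h]

lemma explAt_succ_cons {v : Fin n} {rest : List (Fin n)}
    (h : stackAt G i = v :: rest) :
    explAt G (i+1) = insert v (explAt G i) := by
  unfold explAt; rw [dfsState_succ_cons h]; rfl

lemma stackAt_succ_nil (h : stackAt G i = []) : stackAt G (i+1) = [] := by
  unfold stackAt; rw [dfsState_succ_nil h]; exact h

lemma explAt_succ_nil (h : stackAt G i = []) : explAt G (i+1) = explAt G i := by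
  unfold explAt; rw [dfsState_succ_nil h]

lemma newNbrs_eq_filter {v : Fin n} {rest : List (Fin n)}
    (h : stackAt G i = v :: rest) :
    newNbrs G i = (G.neighborFinset v).filter
      (fun w => w ∉ explAt G i ∧ w ∉ (v :: rest)) := by
  unfold newNbrs
  rw [dfsState_eq G i, h]

/-- invariants -/
lemma stack_nodup (G : SimpleGraph (Fin n)) (i : ℕ) :
    (stackAt G i).Nodup ∧ ∀ v ∈ stackAt G i, v ∉ explAt G i := by
  induction i with
  | zero =>
      constructor
      · exact (List.take_sublist _ _).nodup (List.nodup_finRange n)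
      · intro v _ hv
        simp [explAt_zero] at hv
  | succ i ih =>
      rcases h : stackAt G i with _ | ⟨v, rest⟩
      · have h2 := dfsState_succ_nil h
        unfold stackAt explAt
        rw [h2]
        exact ih
      · have hnodup : (v :: rest).Nodup := h ▸ ih.1
        have hstk := stackAt_succ_cons h
        have hexp := explAt_succ_cons h
        constructor
        · rw [hstk, List.nodup_append]
          refine ⟨Finset.sort_nodup _ _, (List.nodup_cons.mp hnodup).2, ?_⟩
          intro x hx y hy hxy
          have := (Finset.mem_filter.mp ((Finset.mem_sort _).mp hx)).2.2
          exact this (by rw [hxy]; exact List.mem_cons_of_mem _ hy)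
        · intro w hw
          rw [hstk] at hw
          rw [hexp, Finset.mem_insert]
          rcases List.mem_append.mp hw with hw | hw
          · have hf := Finset.mem_filter.mp ((Finset.mem_sort _).mp hw)
            push_neg
            exact ⟨fun e => (hf.2.2 (e ▸ List.mem_cons_self (a := v) (l := rest))), hf.2.1⟩
          · push_neg
            refine ⟨fun e => (List.nodup_cons.mp hnodup).1 (e ▸ hw), ?_⟩
            exact ih.2 w (h ▸ List.mem_cons_of_mem _ hw)

lemma explAt_subset_succ (G : SimpleGraph (Fin n)) (i : ℕ) :
    explAt G i ⊆ explAt G (i+1) := by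
  rcases h : stackAt G i with _ | ⟨v, rest⟩
  · rw [explAt_succ_nil h]
  · rw [explAt_succ_cons h]
    exact Finset.subset_insert _ _

lemma explAt_mono (G : SimpleGraph (Fin n)) {i j : ℕ} (h : i ≤ j) :
    explAt G i ⊆ explAt G j := by
  induction j with
  | zero => simpa [Nat.le_zero.mp h]
  | succ j ih =>
      rcases Nat.lt_or_ge i (j+1) with h' | h'
      · exact (ih (Nat.lt_succ_iff.mp h')).trans (explAt_subset_succ G j)
      · have : i = j + 1 := le_antisymm h h'
        simp [this]

lemma seenF_subset_succ (G : SimpleGraph (Fin n)) (i : ℕ) :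
    seenF G i ⊆ seenF G (i+1) := by
  rcases h : stackAt G i with _ | ⟨v, rest⟩
  · unfold seenF stackAt
    rw [dfsState_succ_nil h]
  · unfold seenF
    rw [show (dfsState G (i+1)).2 = explAt G (i+1) from rfl,
      stackAt_succ_cons h, explAt_succ_cons h,
      show (dfsState G i).2 = explAt G i from rfl, h]
    intro x hx
    simp only [Finset.mem_union, Finset.mem_insert, List.mem_toFinset,
      List.mem_cons, List.mem_append] at *
    rcases hx with hx | hx | hx
    · exact Or.inl (Or.inr hx)
    · exact Or.inl (Or.inl hx)
    · exact Or.inr (Or.inr hx)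

lemma seenF_mono (G : SimpleGraph (Fin n)) {i j : ℕ} (h : i ≤ j) :
    seenF G i ⊆ seenF G j := by
  induction j with
  | zero => simpa [Nat.le_zero.mp h]
  | succ j ih =>
      rcases Nat.lt_or_ge i (j+1) with h' | h'
      · exact (ih (Nat.lt_succ_iff.mp h')).trans (seenF_subset_succ G j)
      · have : i = j + 1 := le_antisymm h h'
        simp [this]

lemma mem_explAt_succ {v : Fin n} :
    v ∈ explAt G (i+1) ↔ v ∈ explAt G i ∨ (stackAt G i).head? = some v := by
  rcases h : stackAt G i with _ | ⟨u, rest⟩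
  · rw [explAt_succ_nil h]; simp
  · rw [explAt_succ_cons h]
    simp only [Finset.mem_insert, List.head?_cons, Option.some.injEq]
    constructor
    · rintro (rfl | hv)
      · exact Or.inr rfl
      · exact Or.inl hv
    · rintro (hv | rfl)
      · exact Or.inr hv
      · exact Or.inl rfl

lemma popped_of_mem_expl {v : Fin n} (h : v ∈ explAt G i) :
    ∃ j < i, (stackAt G j).head? = some v := by
  induction i with
  | zero => simp [explAt_zero] at h
  | succ i ih =>
      rcases mem_explAt_succ.mp h with h | h
      · obtain ⟨j, hj, hj2⟩ := ih h
        exact ⟨j, hj.trans (Nat.lt_succ_self i), hj2⟩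
      · exact ⟨i, Nat.lt_succ_self i, h⟩

lemma head_not_mem_expl {v : Fin n} (h : (stackAt G i).head? = some v) :
    v ∉ explAt G i :=
  (stack_nodup G i).2 v (List.mem_of_mem_head? h)

lemma mem_expl_of_head {v : Fin n} (h : (stackAt G i).head? = some v) {j : ℕ}
    (hij : i < j) : v ∈ explAt G j := by
  have : v ∈ explAt G (i+1) := mem_explAt_succ.mpr (Or.inr h)
  exact explAt_mono G hij this

lemma pop_unique {v : Fin n} {i j : ℕ} (hi : (stackAt G i).head? = some v)
    (hj : (stackAt G j).head? = some v) : i = j := by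
  by_contra hne
  rcases Nat.lt_or_ge i j with h | h
  · exact head_not_mem_expl hj (mem_expl_of_head hi h)
  · exact head_not_mem_expl hi (mem_expl_of_head hj (lt_of_le_of_ne h (Ne.symm hne)))

lemma card_explAt_le (G : SimpleGraph (Fin n)) (i : ℕ) :
    (explAt G i).card ≤ i := by
  induction i with
  | zero => simp [explAt_zero]
  | succ i ih =>
      rcases h : stackAt G i with _ | ⟨v, rest⟩
      · rw [explAt_succ_nil h]
        exact ih.trans (Nat.le_succ i)
      · rw [explAt_succ_cons h]
        exact (Finset.card_insert_le _ _).trans (Nat.succ_le_succ ih)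

lemma stack_empty_stable {i j : ℕ} (h : stackAt G i = []) (hij : i ≤ j) :
    stackAt G j = [] := by
  induction j with
  | zero => rw [Nat.le_zero.mp hij] at h; exact h
  | succ j ih =>
      rcases Nat.lt_or_ge i (j+1) with h' | h'
      · exact stackAt_succ_nil (ih (Nat.lt_succ_iff.mp h'))
      · rw [le_antisymm hij h'] at h; exact h

lemma card_explAt_of_ne_nil (h : stackAt G i ≠ []) :
    (explAt G i).card = i := by
  induction i with
  | zero => simp [explAt_zero]
  | succ i ih =>
      have hi : stackAt G i ≠ [] := fun e => h (stack_empty_stable e (Nat.le_succ i))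
      rcases h' : stackAt G i with _ | ⟨v, rest⟩
      · exact absurd h' hi
      · rw [explAt_succ_cons h']
        rw [Finset.card_insert_of_notMem, ih hi]
        exact (stack_nodup G i).2 v (h' ▸ List.mem_cons_self (a := v) (l := rest))

lemma seenF_def (G : SimpleGraph (Fin n)) (i : ℕ) :
    seenF G i = explAt G i ∪ (stackAt G i).toFinset := rfl

lemma mem_seenF {v : Fin n} :
    v ∈ seenF G i ↔ v ∈ explAt G i ∨ v ∈ stackAt G i := by
  rw [seenF_def]; simp

lemma seenF_eq_expl_of_nil (h : stackAt G i = []) : seenF G i = explAt G i := by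
  rw [seenF_def, h]; simp

/-! ### Connectivity facts -/

section Connected
variable (hG : G.Connected)
include hG

omit hG in
lemma zero_mem_seenF (h : 0 < n) (i : ℕ) : (⟨0, h⟩ : Fin n) ∈ seenF G i := by
  refine seenF_mono G (Nat.zero_le i) ?_
  rw [mem_seenF, stackAt_zero h]
  exact Or.inr (List.mem_singleton_self _)

omit hG in
lemma closed_of_empty (h : stackAt G i = []) :
    ∀ a ∈ explAt G i, ∀ w, G.Adj a w → w ∈ explAt G i := by
  intro a ha w haw
  obtain ⟨j, hji, hj⟩ := popped_of_mem_expl ha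
  rcases hs : stackAt G j with _ | ⟨a', rest⟩
  · rw [hs] at hj; simp at hj
  · rw [hs] at hj
    simp only [List.head?_cons, Option.some.injEq] at hj
    subst hj
    have hw : w ∈ seenF G (j+1) := by
      rw [mem_seenF]
      by_cases h1 : w ∈ explAt G j
      · exact Or.inl (explAt_subset_succ G j h1)
      · by_cases h2 : w ∈ stackAt G j
        · rw [stackAt_succ_cons hs]
          rw [hs] at h2
          rcases List.mem_cons.mp h2 with rfl | h2
          · exact Or.inl (explAt_succ_cons hs ▸ Finset.mem_insert_self _ _)
          · exact Or.inr (List.mem_append_right _ h2)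
        · refine Or.inr ?_
          rw [stackAt_succ_cons hs]
          refine List.mem_append_left _ ?_
          rw [Finset.mem_sort]
          rw [hs] at h2
          exact Finset.mem_filter.mpr ⟨(SimpleGraph.mem_neighborFinset _ _ _).mpr haw, h1, h2⟩
    have : seenF G (j+1) ⊆ seenF G i := seenF_mono G hji
    rw [seenF_eq_expl_of_nil h] at this
    exact this hw

lemma closed_eq_univ {s : Finset (Fin n)} {v0 : Fin n} (h0 : v0 ∈ s)
    (hcl : ∀ a ∈ s, ∀ w, G.Adj a w → w ∈ s) : s = Finset.univ := by
  have key : ∀ (u w : Fin n), G.Reachable u w → u ∈ s → w ∈ s := by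
    intro u w hr hu
    obtain ⟨p⟩ := hr
    induction p with
    | nil => exact hu
    | cons hadj p ih => exact ih (hcl _ hu _ hadj)
  exact Finset.eq_univ_of_forall fun v => key v0 v (hG.preconnected v0 v) h0

lemma stack_ne_nil_or_univ (i : ℕ) :
    stackAt G i ≠ [] ∨ explAt G i = Finset.univ := by
  have hpos : 0 < n := Fin.pos_iff_nonempty.mpr hG.nonempty
  induction i with
  | zero =>
      left
      rw [stackAt_zero hpos]
      simp
  | succ i ih =>
      rcases ih with ih | ih
      · by_cases h1 : stackAt G (i+1) = []
        · right
          have h0 : (⟨0, hpos⟩ : Fin n) ∈ explAt G (i+1) := by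
            have := zero_mem_seenF (G := G) hpos (i+1)
            rwa [seenF_eq_expl_of_nil h1] at this
          exact closed_eq_univ hG h0 (closed_of_empty h1)
        · exact Or.inl h1
      · right
        exact Finset.eq_univ_of_forall fun v => explAt_subset_succ G i (ih ▸ Finset.mem_univ v)

lemma stack_ne_nil_of_lt {i : ℕ} (h : i < n) : stackAt G i ≠ [] := by
  rcases stack_ne_nil_or_univ hG i with h' | h'
  · exact h'
  · exfalso
    have := card_explAt_le G i
    rw [h', Finset.card_univ, Fintype.card_fin] at this
    omega

omit hG in
lemma stack_nil_at_n : stackAt G n = [] := by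
  by_contra hne
  have hcard := card_explAt_of_ne_nil hne
  have huniv : explAt G n = Finset.univ :=
    Finset.eq_univ_of_card _ (by rw [hcard, Fintype.card_fin])
  rcases hs : stackAt G n with _ | ⟨v, rest⟩
  · exact hne hs
  · have : v ∉ explAt G n := head_not_mem_expl (by rw [hs]; rfl)
    rw [huniv] at this
    exact this (Finset.mem_univ v)

omit hG in
lemma stack_nil_of_ge {i : ℕ} (h : n ≤ i) : stackAt G i = [] :=
  stack_empty_stable stack_nil_at_n h

omit hG in
lemma lt_of_stack_ne_nil {i : ℕ} (h : stackAt G i ≠ []) : i < n := by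
  by_contra h'
  exact h (stack_nil_of_ge (le_of_not_gt h'))

lemma explAt_n_univ : explAt G n = Finset.univ := by
  rcases stack_ne_nil_or_univ hG n with h | h
  · exact absurd stack_nil_at_n h
  · exact h

lemma exists_popTime (v : Fin n) : ∃ i < n, (stackAt G i).head? = some v :=
  popped_of_mem_expl (explAt_n_univ hG ▸ Finset.mem_univ v)

end Connected

/-! ### Runs comparison -/

lemma newNbrs_nil (h : stackAt G i = []) : newNbrs G i = ∅ := by
  unfold newNbrs
  rw [dfsState_eq G i, h]

lemma mem_newNbrs_iff {w : Fin n} {v : Fin n} {rest : List (Fin n)}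
    (h : stackAt G i = v :: rest) :
    w ∈ newNbrs G i ↔ G.Adj v w ∧ w ∉ explAt G i ∧ w ∉ stackAt G i := by
  rw [newNbrs_eq_filter h, Finset.mem_filter, SimpleGraph.mem_neighborFinset, h]

lemma seenF_congr (heq : dfsState G i = dfsState T i) : seenF G i = seenF T i := by
  unfold seenF stackAt
  rw [heq]

lemma run_eq (hTG : T ≤ G)
    (key : ∀ i v rest, stackAt G i = v :: rest → dfsState G i = dfsState T i →
      ∀ w, G.Adj v w → w ∉ explAt G i → w ∉ stackAt G i → T.Adj v w) :
    ∀ i, dfsState G i = dfsState T i ∧ newNbrs G i = newNbrs T i := by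
  have hfil : ∀ i v rest, stackAt G i = v :: rest → dfsState G i = dfsState T i →
      (G.neighborFinset v).filter (fun w => w ∉ explAt G i ∧ w ∉ (v :: rest)) =
      (T.neighborFinset v).filter (fun w => w ∉ explAt G i ∧ w ∉ (v :: rest)) := by
    intro i v rest h heq
    ext w
    simp only [Finset.mem_filter, SimpleGraph.mem_neighborFinset]
    constructor
    · rintro ⟨hadj, h1, h2⟩
      exact ⟨key i v rest h heq w hadj h1 (by rw [h]; exact h2), h1, h2⟩
    · rintro ⟨hadj, h1, h2⟩
      exact ⟨hTG hadj, h1, h2⟩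
  have main : ∀ i, dfsState G i = dfsState T i := by
    intro i
    induction i with
    | zero => rfl
    | succ i ih =>
        rcases h : stackAt G i with _ | ⟨v, rest⟩
        · have h' : stackAt T i = [] := by
            unfold stackAt; rw [← ih]; exact h
          rw [dfsState_succ_nil h, dfsState_succ_nil h', ih]
        · have h' : stackAt T i = v :: rest := by
            unfold stackAt; rw [← ih]; exact h
          have hexp : explAt T i = explAt G i := by
            unfold explAt; rw [ih]
          rw [dfsState_succ_cons h, dfsState_succ_cons h', hexp, hfil i v rest h ih]
  intro i
  refine ⟨main i, ?_⟩
  rcases h : stackAt G i with _ | ⟨v, rest⟩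
  · have h' : stackAt T i = [] := by
      unfold stackAt; rw [← main i]; exact h
    rw [newNbrs_nil h, newNbrs_nil h']
  · have h' : stackAt T i = v :: rest := by
      unfold stackAt; rw [← main i]; exact h
    have hexp : explAt T i = explAt G i := by
      unfold explAt; rw [main i]
    rw [newNbrs_eq_filter h, newNbrs_eq_filter h', hexp, hfil i v rest h (main i)]

/-! ### dfTree facts -/

lemma adj_of_mem_newNbrs {w u : Fin n}
    (hh : (stackAt G i).head? = some u) (hw : w ∈ newNbrs G i) :
    G.Adj u w ∧ w ∉ explAt G i ∧ w ∉ stackAt G i := by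
  rcases h : stackAt G i with _ | ⟨v, rest⟩
  · rw [newNbrs_nil h] at hw
    simp at hw
  · rw [h] at hh
    simp only [List.head?_cons, Option.some.injEq] at hh
    subst hh
    have := (mem_newNbrs_iff h).mp hw
    rwa [h] at this

lemma dfTree_le (G : SimpleGraph (Fin n)) : dfTree G ≤ G := by
  intro u v hadj
  rw [dfTree, SimpleGraph.fromRel_adj] at hadj
  obtain ⟨hne, h⟩ := hadj
  rcases h with ⟨i, hi, hh, hm⟩ | ⟨i, hi, hh, hm⟩
  · exact (adj_of_mem_newNbrs hh hm).1
  · exact ((adj_of_mem_newNbrs hh hm).1).symm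

lemma dfTree_adj_of_newNbrs {v w : Fin n} {rest : List (Fin n)} (hG : G.Connected)
    (h : stackAt G i = v :: rest) (hw : w ∈ newNbrs G i) : (dfTree G).Adj v w := by
  have hi : i < n := lt_of_stack_ne_nil (G := G) (by rw [h]; simp)
  obtain ⟨hadj, hnex, hnst⟩ := (mem_newNbrs_iff h).mp hw
  rw [dfTree, SimpleGraph.fromRel_adj]
  refine ⟨fun e => hnst (e ▸ (h ▸ List.mem_cons_self (a := v) (l := rest))), Or.inl ?_⟩
  exact ⟨i, hi, by rw [h]; rfl, hw⟩

lemma seenF_succ_nil (h : stackAt G i = []) : seenF G (i+1) = seenF G i := by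
  unfold seenF stackAt
  rw [dfsState_succ_nil h]

lemma dfTree_connected (hG : G.Connected) : (dfTree G).Connected := by
  have hpos : 0 < n := Fin.pos_iff_nonempty.mpr hG.nonempty
  set v0 : Fin n := ⟨0, hpos⟩ with hv0
  have claim : ∀ i, ∀ v ∈ seenF G i, (dfTree G).Reachable v0 v := by
    intro i
    induction i with
    | zero =>
        intro v hv
        rw [mem_seenF] at hv
        rcases hv with hv | hv
        · simp [explAt_zero] at hv
        · rw [stackAt_zero hpos] at hv
          rw [List.mem_singleton.mp hv]
    | succ i ih =>
        intro v hv
        rcases h : stackAt G i with _ | ⟨u, rest⟩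
        · exact ih v (by rwa [seenF_succ_nil h] at hv)
        · have hu : u ∈ seenF G i := mem_seenF.mpr (Or.inr (h ▸ List.mem_cons_self (a := u) (l := rest)))
          rw [mem_seenF] at hv
          rcases hv with hv | hv
          · rw [explAt_succ_cons h, Finset.mem_insert] at hv
            rcases hv with rfl | hv
            · exact ih v hu
            · exact ih v (mem_seenF.mpr (Or.inl hv))
          · rw [stackAt_succ_cons h] at hv
            rcases List.mem_append.mp hv with hv | hv
            · have hvn : v ∈ newNbrs G i := by
                rw [newNbrs_eq_filter h]
                exact (Finset.mem_sort _).mp hv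
              exact (ih u hu).trans (dfTree_adj_of_newNbrs hG h hvn).reachable
            · exact ih v (mem_seenF.mpr (Or.inr (h ▸ List.mem_cons_of_mem u hv)))
  rw [SimpleGraph.connected_iff]
  constructor
  · intro a b
    have ha := claim n a (mem_seenF.mpr (Or.inl (explAt_n_univ hG ▸ Finset.mem_univ a)))
    have hb := claim n b (mem_seenF.mpr (Or.inl (explAt_n_univ hG ▸ Finset.mem_univ b)))
    exact ha.symm.trans hb
  · exact hG.nonempty

lemma eq_of_connected_le_tree {H : SimpleGraph (Fin n)} (hT : T.IsTree)
    (hle : H ≤ T) (hH : H.Connected) : H = T := by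
  refine le_antisymm hle ?_
  intro u v hadj
  have hbridge := (SimpleGraph.isAcyclic_iff_forall_adj_isBridge.mp hT.IsAcyclic) hadj
  rw [SimpleGraph.isBridge_iff_adj_and_forall_walk_mem_edges] at hbridge
  obtain ⟨p⟩ := hH.preconnected u v
  have h2 := hbridge (p.map (SimpleGraph.Hom.ofLE hle))
  rw [SimpleGraph.Walk.edges_map] at h2
  obtain ⟨e, he, hee⟩ := List.mem_map.mp h2
  have heq : e = s(u, v) := by
    simpa [SimpleGraph.Hom.ofLE_apply, Sym2.map_id'] using hee
  exact (SimpleGraph.mem_edgeSet _).mp (heq ▸ p.edges_subset_edgeSet he)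

lemma dfTree_tree_eq (hT : T.IsTree) : dfTree T = T := by
  exact eq_of_connected_le_tree hT (dfTree_le T) (dfTree_connected hT.isConnected)

end RandomGraphs


open RandomGraphs in
/-- For a tree `T` and a connected graph `G` on `[n]`, the
depth-first tree `T(G)` produced by ordered DFS on `G` equals `T` if and only
if `G` is obtained from `T` by adding some subset of the edges permitted by
the ordered DFS of `T`. -/
theorem dfTree_eq_iff (n : ℕ) (T G : SimpleGraph (Fin n))
    (hT : T.IsTree) (hG : G.Connected) :
    dfTree G = T ↔
      (T ≤ G ∧ ∀ e ∈ G.edgeSet, e ∉ T.edgeSet → e ∈ permittedSet T) := by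
  constructor
  · intro hd
    have hle : T ≤ G := hd ▸ dfTree_le G
    have key2 : ∀ i v rest, stackAt G i = v :: rest → dfsState G i = dfsState T i →
        ∀ w, G.Adj v w → w ∉ explAt G i → w ∉ stackAt G i → T.Adj v w := by
      intro i v rest h _ w hadj hnexp hnstk
      have hw : w ∈ newNbrs G i :=
        (mem_newNbrs_iff h).mpr ⟨hadj, hnexp, hnstk⟩
      have := dfTree_adj_of_newNbrs hG h hw
      rwa [hd] at this
    have states := run_eq hle key2
    refine ⟨hle, ?_⟩
    have H : ∀ u v : Fin n, G.Adj u v → ¬ T.Adj u v →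
        ∀ iu iv, (stackAt G iu).head? = some u → (stackAt G iv).head? = some v →
        iu < iv → ∃ j < n, u ∈ stackAt T j ∧ v ∈ stackAt T j := by
      intro u v hadj hnadj iu iv hu hv hlt
      have hvnot : v ∉ explAt G iu := by
        intro hmem
        obtain ⟨k, hk, hkh⟩ := popped_of_mem_expl hmem
        rw [pop_unique hkh hv] at hk
        omega
      by_cases hvs : v ∈ stackAt G iu
      · have hiun : iu < n := lt_of_stack_ne_nil (G := G) (by
          intro e; rw [e] at hu; simp at hu)
        have hst : stackAt T iu = stackAt G iu := by
          unfold stackAt; rw [(states iu).1]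
        exact ⟨iu, hiun, hst ▸ List.mem_of_mem_head? hu, hst ▸ hvs⟩
      · exfalso
        rcases hs : stackAt G iu with _ | ⟨u', rest⟩
        · rw [hs] at hu; simp at hu
        · rw [hs] at hu
          simp only [List.head?_cons, Option.some.injEq] at hu
          subst hu
          rw [hs] at hvs
          have hw : v ∈ newNbrs G iu := (mem_newNbrs_iff hs).mpr
            ⟨hadj, hvnot, by rw [hs]; exact hvs⟩
          have := dfTree_adj_of_newNbrs hG hs hw
          rw [hd] at this
          exact hnadj this
    intro e he hne
    induction e with
    | h u v =>
      have hadj : G.Adj u v := (SimpleGraph.mem_edgeSet _).mp he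
      have hnadj : ¬ T.Adj u v := fun h => hne ((SimpleGraph.mem_edgeSet _).mpr h)
      obtain ⟨iu, _, hu⟩ := exists_popTime hG u
      obtain ⟨iv, _, hv⟩ := exists_popTime hG v
      have hne' : iu ≠ iv := by
        intro e
        rw [e, hv] at hu
        exact hadj.ne (Option.some.inj hu).symm
      rcases lt_or_gt_of_ne hne' with hlt | hlt
      · obtain ⟨j, hj, h1, h2⟩ := H u v hadj hnadj iu iv hu hv hlt
        exact ⟨u, v, rfl, hadj.ne, hnadj, j, hj, h1, h2⟩
      · obtain ⟨j, hj, h1, h2⟩ := H v u hadj.symm (fun h => hnadj h.symm) iv iu hv hu hlt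
        exact ⟨u, v, rfl, hadj.ne, hnadj, j, hj, h2, h1⟩
  · rintro ⟨hle, hperm⟩
    have key1 : ∀ i v rest, stackAt G i = v :: rest → dfsState G i = dfsState T i →
        ∀ w, G.Adj v w → w ∉ explAt G i → w ∉ stackAt G i → T.Adj v w := by
      intro i v rest h heq w hadj hnexp hnstk
      by_cases hT' : T.Adj v w
      · exact hT'
      · exfalso
        have hp := hperm s(v, w) ((SimpleGraph.mem_edgeSet _).mpr hadj)
          (fun hc => hT' ((SimpleGraph.mem_edgeSet _).mp hc))
        obtain ⟨u', v', hee, _, _, j, _, hu', hv'⟩ := hp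
        have hvw : v ∈ stackAt T j ∧ w ∈ stackAt T j := by
          rcases Sym2.eq_iff.mp hee with ⟨rfl, rfl⟩ | ⟨rfl, rfl⟩
          · exact ⟨hu', hv'⟩
          · exact ⟨hv', hu'⟩
        rcases le_or_gt j i with hji | hij
        · have hwT : w ∈ seenF T i := seenF_mono T hji (mem_seenF.mpr (Or.inr hvw.2))
          rw [← seenF_congr heq, mem_seenF] at hwT
          rcases hwT with hwT | hwT
          · exact hnexp hwT
          · exact hnstk hwT
        · have hvhead : (stackAt T i).head? = some v := by
            unfold stackAt
            rw [← heq]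
            rw [show (dfsState G i).1 = stackAt G i from rfl, h]
            rfl
          exact (stack_nodup T j).2 v hvw.1 (mem_expl_of_head hvhead hij)
    have states := run_eq hle key1
    have hdf : dfTree G = dfTree T := by
      unfold dfTree
      congr 1
      funext u v
      have hst : ∀ i, stackAt G i = stackAt T i := by
        intro i; unfold stackAt; rw [(states i).1]
      apply propext
      constructor
      · rintro ⟨i, hi, h1, h2⟩
        exact ⟨i, hi, hst i ▸ h1, (states i).2 ▸ h2⟩
      · rintro ⟨i, hi, h1, h2⟩
        exact ⟨i, hi, (hst i).symm ▸ h1, ((states i).2).symm ▸ h2⟩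
    rw [hdf, dfTree_tree_eq hT]
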